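/- Define on the monoid M of injective self-maps of ω the equivalence relation f ∼ g iff f(2x) = g(2x) for all but finitely many x ∈ ω, and let X = M/∼ with the M-action induced by left multiplication. Then the class [id] ∈ X is supported on each set A_n = {k ∈ ω : k even, k ≥ 2n} (each of which is co-infinite), but [id] is not supported on the empty set, i.e., [id] is not fixed by all of M. -/
import Mathlib


/-- The monoid of injective self-maps of ω (modelled as ℕ), under composition. -/
def M : Submonoid (Function.End ℕ) where
  carrier := {f | Function.Injective f}
  mul_mem' := fun hf hg => hf.comp hg
  one_mem' := fun _ _ h => h

/-- `x` is supported on `A` if it is fixed by every injection fixing `A` pointwise. -/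
def Supported {X : Type*} [MulAction M X] (A : Set ℕ) (x : X) : Prop :=
  ∀ u : M, (∀ a ∈ A, u.1 a = a) → u • x = x

/-- The equivalence relation `f ∼ g` iff `f (2x) = g (2x)` for all but finitely many `x`. -/
def eqrel : Setoid M where
  r f g := {x : ℕ | f.1 (2*x) ≠ g.1 (2*x)}.Finite
  iseqv := by
    constructor
    · intro f; simp
    · intro f g h
      have : {x : ℕ | g.1 (2*x) ≠ f.1 (2*x)} ⊆ {x : ℕ | f.1 (2*x) ≠ g.1 (2*x)} := by
        intro x hx; exact fun he => hx he.symm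
      exact h.subset this
    · intro f g h hfg hgh
      refine (hfg.union hgh).subset ?_
      intro x hx
      by_contra hc
      simp only [Set.mem_union, Set.mem_setOf_eq, not_or, not_not] at hc
      exact hx (hc.1.trans hc.2)

/-- The `M`-action on the quotient `M/∼` induced by left multiplication. -/
instance : MulAction M (Quotient eqrel) where
  smul u := Quotient.map (fun f => u * f) (by
    intro f g h
    refine h.subset ?_
    intro x hx
    exact fun he => hx (congrArg u.1 he))
  one_smul x := Quotient.inductionOn x fun f => congrArg (Quotient.mk eqrel) (one_mul f)
  mul_smul u v x := Quotient.inductionOn x fun f =>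
    congrArg (Quotient.mk eqrel) (mul_assoc u v f)

theorem stmt_6 :
    (∀ n : ℕ, (({k : ℕ | Even k ∧ 2*n ≤ k}ᶜ : Set ℕ).Infinite ∧
      Supported {k : ℕ | Even k ∧ 2*n ≤ k} (Quotient.mk eqrel (1 : M)))) ∧
    ¬ Supported (∅ : Set ℕ) (Quotient.mk eqrel (1 : M)) := by
  constructor
  · intro n
    constructor
    · apply Set.infinite_of_injective_forall_mem
        (f := fun m : ℕ => 2*m+1)
      · intro a b h
        simp only at h
        omega
      · intro m
        simp only [Set.mem_compl_iff, Set.mem_setOf_eq, not_and]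
        intro h
        exact absurd h (by simp only [Nat.even_iff]; omega)
    · intro u hu
      have : u • Quotient.mk eqrel (1 : M) = Quotient.mk eqrel (u * 1) := rfl
      rw [this, mul_one]
      apply Quotient.sound
      show {x : ℕ | u.1 (2*x) ≠ (1 : M).1 (2*x)}.Finite
      apply Set.Finite.subset (Set.finite_Iio n)
      intro x hx
      simp only [Set.mem_setOf_eq] at hx
      by_contra hc
      simp only [Set.mem_Iio, not_lt] at hc
      exact hx (hu (2*x) ⟨⟨x, by ring⟩, by omega⟩)
  · intro h
    set u : M := ⟨fun k => k + 1, fun a b hab => by simpa using hab⟩ with hudef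
    have h2 := h u (by simp)
    have : u • Quotient.mk eqrel (1 : M) = Quotient.mk eqrel (u * 1) := rfl
    rw [this, mul_one] at h2
    have h3 : {x : ℕ | u.1 (2*x) ≠ (1 : M).1 (2*x)}.Finite := Quotient.exact h2
    have : {x : ℕ | u.1 (2*x) ≠ (1 : M).1 (2*x)} = Set.univ := by
      ext x
      simp only [Set.mem_univ, iff_true, Set.mem_setOf_eq]
      show 2*x+1 ≠ 2*x
      omega
    rw [this] at h3
    exact Set.infinite_univ h3
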